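/- arXiv:2301.02774 — 4 statements merged into one kernel-verified Lean document; each statement's English description precedes it below -/
import Mathlib

section
/- For the A.III case with m = n = 2, the Hamiltonian H = (1/2)(p1^2+p2^2+p3^2+p4^2) + (1/2)(q1^2+q2^2)^2 + (1/2)(q3^2+q4^2)^2 + (q1*q3+q2*q4)^2 + ((a1-b1)/2)q1^2 + ((a1-b2)/2)q2^2 + ((a2-b1)/2)q3^2 + ((a2-b2)/2)q4^2 Poisson-commutes with the quadratic integral f1 = -M12^2/(a1-a2) + p1^2 + p2^2 + (q1^2+q2^2+q3^2+a1-b1)q1^2 + (q1^2+q2^2+q4^2+a1-b2)q2^2 + 2q1q2q3q4, where M12 = (q1*p3-q3*p1)+(q2*p4-q4*p2), for any real parameters a1 ≠ a2, b1, b2. -/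
/-- Canonical Poisson bracket of two functions on `T*ℝⁿ ≅ (Fin n → ℝ) × (Fin n → ℝ)`,
`{f,g} = ∑ i, (∂f/∂qᵢ ∂g/∂pᵢ - ∂f/∂pᵢ ∂g/∂qᵢ)`. -/
noncomputable def pb {n : ℕ} (f g : (Fin n → ℝ) × (Fin n → ℝ) → ℝ) :
    (Fin n → ℝ) × (Fin n → ℝ) → ℝ := fun x =>
  ∑ i : Fin n,
    (deriv (fun t => f (Function.update x.1 i t, x.2)) (x.1 i) *
       deriv (fun t => g (x.1, Function.update x.2 i t)) (x.2 i) -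
     deriv (fun t => f (x.1, Function.update x.2 i t)) (x.2 i) *
       deriv (fun t => g (Function.update x.1 i t, x.2)) (x.1 i))

private lemma dkey (c4 c3 c2 c1 c0 v : ℝ) :
    deriv (fun t => c4*t^4 + c3*t^3 + c2*t^2 + c1*t + c0) v
      = 4*c4*v^3 + 3*c3*v^2 + 2*c2*v + c1 := by
  have h := hasDerivAt_id v
  have H := ((((h.pow 4).const_mul c4).add ((h.pow 3).const_mul c3)).add ((h.pow 2).const_mul c2)).add ((h.const_mul c1).add_const c0)
  have H' : HasDerivAt (fun t : ℝ => c4*t^4 + c3*t^3 + c2*t^2 + c1*t + c0) (4*c4*v^3 + 3*c3*v^2 + 2*c2*v + c1) v := by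
    refine HasDerivAt.congr_of_eventuallyEq (H.congr_deriv ?_) (Filter.Eventually.of_forall fun t => ?_)
    · simp only [id]; ring
    · simp only [id, Pi.add_apply, Pi.pow_apply]; ring
  exact H'.deriv

set_option maxHeartbeats 1600000 in
theorem stmt6 (a1 a2 b1 b2 : ℝ) (h : a1 ≠ a2) :
    pb (n := 4) (fun x => (1/2)*(x.2 0^2 + x.2 1^2 + x.2 2^2 + x.2 3^2) + (1/2)*(x.1 0^2 + x.1 1^2)^2 + (1/2)*(x.1 2^2 + x.1 3^2)^2 + (x.1 0*x.1 2 + x.1 1*x.1 3)^2 + ((a1 - b1)/2)*x.1 0^2 + ((a1 - b2)/2)*x.1 1^2 + ((a2 - b1)/2)*x.1 2^2 + ((a2 - b2)/2)*x.1 3^2)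
      (fun x => -((x.1 0*x.2 2 - x.1 2*x.2 0) + (x.1 1*x.2 3 - x.1 3*x.2 1))^2/(a1 - a2) + x.2 0^2 + x.2 1^2 + ((x.1 0^2 + x.1 1^2 + x.1 2^2 + a1 - b1)*x.1 0^2 + (x.1 0^2 + x.1 1^2 + x.1 3^2 + a1 - b2)*x.1 1^2 + 2*x.1 0*x.1 1*x.1 2*x.1 3)) = 0 := by
  funext x
  obtain ⟨q, p⟩ := x
  simp only [pb, Fin.sum_univ_four, Function.update_apply, Fin.isValue, Fin.reduceEq,
    if_false, if_true, ite_true, ite_false, Pi.zero_apply]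
  rw [show (fun t : ℝ => (1/2)*(p 0^2 + p 1^2 + p 2^2 + p 3^2) + (1/2)*(t^2 + q 1^2)^2 + (1/2)*(q 2^2 + q 3^2)^2 + (t*q 2 + q 1*q 3)^2 + ((a1 - b1)/2)*t^2 + ((a1 - b2)/2)*q 1^2 + ((a2 - b1)/2)*q 2^2 + ((a2 - b2)/2)*q 3^2) = (fun t : ℝ => ((1/2))*t^4 + (0)*t^3 + ((-1/2)*b1 + (1/2)*a1 + q 2^2 + q 1^2)*t^2 + ((2)*q 1*q 2*q 3)*t + ((1/2)*p 3^2 + (1/2)*p 2^2 + (1/2)*p 1^2 + (1/2)*p 0^2 + (-1/2)*q 3^2*b2 + (1/2)*q 3^2*a2 + (1/2)*q 3^4 + (-1/2)*q 2^2*b1 + (1/2)*q 2^2*a2 + q 2^2*q 3^2 + (1/2)*q 2^4 + (-1/2)*q 1^2*b2 + (1/2)*q 1^2*a1 + q 1^2*q 3^2 + (1/2)*q 1^4)) from by funext t; ring, dkey]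
  rw [show (fun t : ℝ => -((q 0*p 2 - q 2*t) + (q 1*p 3 - q 3*p 1))^2/(a1 - a2) + t^2 + p 1^2 + ((q 0^2 + q 1^2 + q 2^2 + a1 - b1)*q 0^2 + (q 0^2 + q 1^2 + q 3^2 + a1 - b2)*q 1^2 + 2*q 0*q 1*q 2*q 3)) = (fun t : ℝ => (0)*t^4 + (0)*t^3 + ((1) + (-1)*q 2^2*(a1 - a2)⁻¹)*t^2 + ((-2)*q 2*q 3*p 1*(a1 - a2)⁻¹ + (2)*q 1*q 2*p 3*(a1 - a2)⁻¹ + (2)*q 0*q 2*p 2*(a1 - a2)⁻¹)*t + (p 1^2 + (-1)*q 3^2*p 1^2*(a1 - a2)⁻¹ + (2)*q 1*q 3*p 1*p 3*(a1 - a2)⁻¹ + (-1)*q 1^2*b2 + q 1^2*a1 + (-1)*q 1^2*p 3^2*(a1 - a2)⁻¹ + q 1^2*q 3^2 + q 1^4 + (2)*q 0*q 3*p 1*p 2*(a1 - a2)⁻¹ + (-2)*q 0*q 1*p 2*p 3*(a1 - a2)⁻¹ + (2)*q 0*q 1*q 2*q 3 + (-1)*q 0^2*b1 + q 0^2*a1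 + (-1)*q 0^2*p 2^2*(a1 - a2)⁻¹ + q 0^2*q 2^2 + (2)*q 0^2*q 1^2 + q 0^4)) from by funext t; ring, dkey]
  rw [show (fun t : ℝ => (1/2)*(t^2 + p 1^2 + p 2^2 + p 3^2) + (1/2)*(q 0^2 + q 1^2)^2 + (1/2)*(q 2^2 + q 3^2)^2 + (q 0*q 2 + q 1*q 3)^2 + ((a1 - b1)/2)*q 0^2 + ((a1 - b2)/2)*q 1^2 + ((a2 - b1)/2)*q 2^2 + ((a2 - b2)/2)*q 3^2) = (fun t : ℝ => (0)*t^4 + (0)*t^3 + ((1/2))*t^2 + (0)*t + ((1/2)*p 3^2 + (1/2)*p 2^2 + (1/2)*p 1^2 + (-1/2)*q 3^2*b2 + (1/2)*q 3^2*a2 + (1/2)*q 3^4 + (-1/2)*q 2^2*b1 + (1/2)*q 2^2*a2 + q 2^2*q 3^2 + (1/2)*q 2^4 + (-1/2)*q 1^2*b2 + (1/2)*q 1^2*a1 + q 1^2*q 3^2 + (1/2)*q 1^4 + (2)*q 0*q 1*q 2*q 3 + (-1/2)*q 0^2*b1 + (1/2)*q 0^2*a1 + q 0^2*q 2^2 +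 q 0^2*q 1^2 + (1/2)*q 0^4)) from by funext t; ring, dkey]
  rw [show (fun t : ℝ => -((t*p 2 - q 2*p 0) + (q 1*p 3 - q 3*p 1))^2/(a1 - a2) + p 0^2 + p 1^2 + ((t^2 + q 1^2 + q 2^2 + a1 - b1)*t^2 + (t^2 + q 1^2 + q 3^2 + a1 - b2)*q 1^2 + 2*t*q 1*q 2*q 3)) = (fun t : ℝ => ((1))*t^4 + (0)*t^3 + ((-1)*b1 + a1 + (-1)*p 2^2*(a1 - a2)⁻¹ + q 2^2 + (2)*q 1^2)*t^2 + ((2)*q 3*p 1*p 2*(a1 - a2)⁻¹ + (2)*q 2*p 0*p 2*(a1 - a2)⁻¹ + (-2)*q 1*p 2*p 3*(a1 - a2)⁻¹ + (2)*q 1*q 2*q 3)*t + (p 1^2 + p 0^2 + (-1)*q 3^2*p 1^2*(a1 - a2)⁻¹ + (-2)*q 2*q 3*p 0*p 1*(a1 - a2)⁻¹ + (-1)*q 2^2*p 0^2*(a1 - a2)⁻¹ + (2)*q 1*q 3*p 1*p 3*(a1 - a2)⁻¹ + (2)*q 1*q 2*p 0*p 3*(a1 - a2)⁻¹ + (-1)*q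 1^2*b2 + q 1^2*a1 + (-1)*q 1^2*p 3^2*(a1 - a2)⁻¹ + q 1^2*q 3^2 + q 1^4)) from by funext t; ring, dkey]
  rw [show (fun t : ℝ => (1/2)*(p 0^2 + p 1^2 + p 2^2 + p 3^2) + (1/2)*(q 0^2 + t^2)^2 + (1/2)*(q 2^2 + q 3^2)^2 + (q 0*q 2 + t*q 3)^2 + ((a1 - b1)/2)*q 0^2 + ((a1 - b2)/2)*t^2 + ((a2 - b1)/2)*q 2^2 + ((a2 - b2)/2)*q 3^2) = (fun t : ℝ => ((1/2))*t^4 + (0)*t^3 + ((-1/2)*b2 + (1/2)*a1 + q 3^2 + q 0^2)*t^2 + ((2)*q 0*q 2*q 3)*t + ((1/2)*p 3^2 + (1/2)*p 2^2 + (1/2)*p 1^2 + (1/2)*p 0^2 + (-1/2)*q 3^2*b2 + (1/2)*q 3^2*a2 + (1/2)*q 3^4 + (-1/2)*q 2^2*b1 + (1/2)*q 2^2*a2 + q 2^2*q 3^2 + (1/2)*q 2^4 + (-1/2)*q 0^2*b1 + (1/2)*q 0^2*a1 + q 0^2*q 2^2 + (1/2)*q 0^4)) from by funext t; ring, dkey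]
  rw [show (fun t : ℝ => -((q 0*p 2 - q 2*p 0) + (q 1*p 3 - q 3*t))^2/(a1 - a2) + p 0^2 + t^2 + ((q 0^2 + q 1^2 + q 2^2 + a1 - b1)*q 0^2 + (q 0^2 + q 1^2 + q 3^2 + a1 - b2)*q 1^2 + 2*q 0*q 1*q 2*q 3)) = (fun t : ℝ => (0)*t^4 + (0)*t^3 + ((1) + (-1)*q 3^2*(a1 - a2)⁻¹)*t^2 + ((-2)*q 2*q 3*p 0*(a1 - a2)⁻¹ + (2)*q 1*q 3*p 3*(a1 - a2)⁻¹ + (2)*q 0*q 3*p 2*(a1 - a2)⁻¹)*t + (p 0^2 + (-1)*q 2^2*p 0^2*(a1 - a2)⁻¹ + (2)*q 1*q 2*p 0*p 3*(a1 - a2)⁻¹ + (-1)*q 1^2*b2 + q 1^2*a1 + (-1)*q 1^2*p 3^2*(a1 - a2)⁻¹ + q 1^2*q 3^2 + q 1^4 + (2)*q 0*q 2*p 0*p 2*(a1 - a2)⁻¹ + (-2)*q 0*q 1*p 2*p 3*(a1 - a2)⁻¹ + (2)*q 0*q 1*q 2*q 3 + (-1)*q 0^2*b1 + q 0^2*a1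 + (-1)*q 0^2*p 2^2*(a1 - a2)⁻¹ + q 0^2*q 2^2 + (2)*q 0^2*q 1^2 + q 0^4)) from by funext t; ring, dkey]
  rw [show (fun t : ℝ => (1/2)*(p 0^2 + t^2 + p 2^2 + p 3^2) + (1/2)*(q 0^2 + q 1^2)^2 + (1/2)*(q 2^2 + q 3^2)^2 + (q 0*q 2 + q 1*q 3)^2 + ((a1 - b1)/2)*q 0^2 + ((a1 - b2)/2)*q 1^2 + ((a2 - b1)/2)*q 2^2 + ((a2 - b2)/2)*q 3^2) = (fun t : ℝ => (0)*t^4 + (0)*t^3 + ((1/2))*t^2 + (0)*t + ((1/2)*p 3^2 + (1/2)*p 2^2 + (1/2)*p 0^2 + (-1/2)*q 3^2*b2 + (1/2)*q 3^2*a2 + (1/2)*q 3^4 + (-1/2)*q 2^2*b1 + (1/2)*q 2^2*a2 + q 2^2*q 3^2 + (1/2)*q 2^4 + (-1/2)*q 1^2*b2 + (1/2)*q 1^2*a1 + q 1^2*q 3^2 + (1/2)*q 1^4 + (2)*q 0*q 1*q 2*q 3 + (-1/2)*q 0^2*b1 + (1/2)*q 0^2*a1 + q 0^2*q 2^2 +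 q 0^2*q 1^2 + (1/2)*q 0^4)) from by funext t; ring, dkey]
  rw [show (fun t : ℝ => -((q 0*p 2 - q 2*p 0) + (t*p 3 - q 3*p 1))^2/(a1 - a2) + p 0^2 + p 1^2 + ((q 0^2 + t^2 + q 2^2 + a1 - b1)*q 0^2 + (q 0^2 + t^2 + q 3^2 + a1 - b2)*t^2 + 2*q 0*t*q 2*q 3)) = (fun t : ℝ => ((1))*t^4 + (0)*t^3 + ((-1)*b2 + a1 + (-1)*p 3^2*(a1 - a2)⁻¹ + q 3^2 + (2)*q 0^2)*t^2 + ((2)*q 3*p 1*p 3*(a1 - a2)⁻¹ + (2)*q 2*p 0*p 3*(a1 - a2)⁻¹ + (-2)*q 0*p 2*p 3*(a1 - a2)⁻¹ + (2)*q 0*q 2*q 3)*t + (p 1^2 + p 0^2 + (-1)*q 3^2*p 1^2*(a1 - a2)⁻¹ + (-2)*q 2*q 3*p 0*p 1*(a1 - a2)⁻¹ + (-1)*q 2^2*p 0^2*(a1 - a2)⁻¹ + (2)*q 0*q 3*p 1*p 2*(a1 - a2)⁻¹ + (2)*q 0*q 2*p 0*p 2*(a1 - a2)⁻¹ + (-1)*q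 0^2*b1 + q 0^2*a1 + (-1)*q 0^2*p 2^2*(a1 - a2)⁻¹ + q 0^2*q 2^2 + q 0^4)) from by funext t; ring, dkey]
  rw [show (fun t : ℝ => (1/2)*(p 0^2 + p 1^2 + p 2^2 + p 3^2) + (1/2)*(q 0^2 + q 1^2)^2 + (1/2)*(t^2 + q 3^2)^2 + (q 0*t + q 1*q 3)^2 + ((a1 - b1)/2)*q 0^2 + ((a1 - b2)/2)*q 1^2 + ((a2 - b1)/2)*t^2 + ((a2 - b2)/2)*q 3^2) = (fun t : ℝ => ((1/2))*t^4 + (0)*t^3 + ((-1/2)*b1 + (1/2)*a2 + q 3^2 + q 0^2)*t^2 + ((2)*q 0*q 1*q 3)*t + ((1/2)*p 3^2 + (1/2)*p 2^2 + (1/2)*p 1^2 + (1/2)*p 0^2 + (-1/2)*q 3^2*b2 + (1/2)*q 3^2*a2 + (1/2)*q 3^4 + (-1/2)*q 1^2*b2 + (1/2)*q 1^2*a1 + q 1^2*q 3^2 + (1/2)*q 1^4 + (-1/2)*q 0^2*b1 + (1/2)*q 0^2*a1 + q 0^2*q 1^2 + (1/2)*q 0^4)) from by funext t; ring, dkey]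
  rw [show (fun t : ℝ => -((q 0*t - q 2*p 0) + (q 1*p 3 - q 3*p 1))^2/(a1 - a2) + p 0^2 + p 1^2 + ((q 0^2 + q 1^2 + q 2^2 + a1 - b1)*q 0^2 + (q 0^2 + q 1^2 + q 3^2 + a1 - b2)*q 1^2 + 2*q 0*q 1*q 2*q 3)) = (fun t : ℝ => (0)*t^4 + (0)*t^3 + ((-1)*q 0^2*(a1 - a2)⁻¹)*t^2 + ((2)*q 0*q 3*p 1*(a1 - a2)⁻¹ + (2)*q 0*q 2*p 0*(a1 - a2)⁻¹ + (-2)*q 0*q 1*p 3*(a1 - a2)⁻¹)*t + (p 1^2 + p 0^2 + (-1)*q 3^2*p 1^2*(a1 - a2)⁻¹ + (-2)*q 2*q 3*p 0*p 1*(a1 - a2)⁻¹ + (-1)*q 2^2*p 0^2*(a1 - a2)⁻¹ + (2)*q 1*q 3*p 1*p 3*(a1 - a2)⁻¹ + (2)*q 1*q 2*p 0*p 3*(a1 - a2)⁻¹ + (-1)*q 1^2*b2 + q 1^2*a1 + (-1)*q 1^2*p 3^2*(a1 - a2)⁻¹ + q 1^2*q 3^2 + q 1^4 + (2)*q 0*q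 1*q 2*q 3 + (-1)*q 0^2*b1 + q 0^2*a1 + q 0^2*q 2^2 + (2)*q 0^2*q 1^2 + q 0^4)) from by funext t; ring, dkey]
  rw [show (fun t : ℝ => (1/2)*(p 0^2 + p 1^2 + t^2 + p 3^2) + (1/2)*(q 0^2 + q 1^2)^2 + (1/2)*(q 2^2 + q 3^2)^2 + (q 0*q 2 + q 1*q 3)^2 + ((a1 - b1)/2)*q 0^2 + ((a1 - b2)/2)*q 1^2 + ((a2 - b1)/2)*q 2^2 + ((a2 - b2)/2)*q 3^2) = (fun t : ℝ => (0)*t^4 + (0)*t^3 + ((1/2))*t^2 + (0)*t + ((1/2)*p 3^2 + (1/2)*p 1^2 + (1/2)*p 0^2 + (-1/2)*q 3^2*b2 + (1/2)*q 3^2*a2 + (1/2)*q 3^4 + (-1/2)*q 2^2*b1 + (1/2)*q 2^2*a2 + q 2^2*q 3^2 + (1/2)*q 2^4 + (-1/2)*q 1^2*b2 + (1/2)*q 1^2*a1 + q 1^2*q 3^2 + (1/2)*q 1^4 + (2)*q 0*q 1*q 2*q 3 + (-1/2)*q 0^2*b1 + (1/2)*q 0^2*a1 + q 0^2*q 2^2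 + q 0^2*q 1^2 + (1/2)*q 0^4)) from by funext t; ring, dkey]
  rw [show (fun t : ℝ => -((q 0*p 2 - t*p 0) + (q 1*p 3 - q 3*p 1))^2/(a1 - a2) + p 0^2 + p 1^2 + ((q 0^2 + q 1^2 + t^2 + a1 - b1)*q 0^2 + (q 0^2 + q 1^2 + q 3^2 + a1 - b2)*q 1^2 + 2*q 0*q 1*t*q 3)) = (fun t : ℝ => (0)*t^4 + (0)*t^3 + ((-1)*p 0^2*(a1 - a2)⁻¹ + q 0^2)*t^2 + ((-2)*q 3*p 0*p 1*(a1 - a2)⁻¹ + (2)*q 1*p 0*p 3*(a1 - a2)⁻¹ + (2)*q 0*p 0*p 2*(a1 - a2)⁻¹ + (2)*q 0*q 1*q 3)*t + (p 1^2 + p 0^2 + (-1)*q 3^2*p 1^2*(a1 - a2)⁻¹ + (2)*q 1*q 3*p 1*p 3*(a1 - a2)⁻¹ + (-1)*q 1^2*b2 + q 1^2*a1 + (-1)*q 1^2*p 3^2*(a1 - a2)⁻¹ + q 1^2*q 3^2 + q 1^4 + (2)*q 0*q 3*p 1*p 2*(a1 - a2)⁻¹ + (-2)*q 0*q 1*p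 2*p 3*(a1 - a2)⁻¹ + (-1)*q 0^2*b1 + q 0^2*a1 + (-1)*q 0^2*p 2^2*(a1 - a2)⁻¹ + (2)*q 0^2*q 1^2 + q 0^4)) from by funext t; ring, dkey]
  rw [show (fun t : ℝ => (1/2)*(p 0^2 + p 1^2 + p 2^2 + p 3^2) + (1/2)*(q 0^2 + q 1^2)^2 + (1/2)*(q 2^2 + t^2)^2 + (q 0*q 2 + q 1*t)^2 + ((a1 - b1)/2)*q 0^2 + ((a1 - b2)/2)*q 1^2 + ((a2 - b1)/2)*q 2^2 + ((a2 - b2)/2)*t^2) = (fun t : ℝ => ((1/2))*t^4 + (0)*t^3 + ((-1/2)*b2 + (1/2)*a2 + q 2^2 + q 1^2)*t^2 + ((2)*q 0*q 1*q 2)*t + ((1/2)*p 3^2 + (1/2)*p 2^2 + (1/2)*p 1^2 + (1/2)*p 0^2 + (-1/2)*q 2^2*b1 + (1/2)*q 2^2*a2 + (1/2)*q 2^4 + (-1/2)*q 1^2*b2 + (1/2)*q 1^2*a1 + (1/2)*q 1^4 + (-1/2)*q 0^2*b1 + (1/2)*q 0^2*a1 + q 0^2*q 2^2 + q 0^2*q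 1^2 + (1/2)*q 0^4)) from by funext t; ring, dkey]
  rw [show (fun t : ℝ => -((q 0*p 2 - q 2*p 0) + (q 1*t - q 3*p 1))^2/(a1 - a2) + p 0^2 + p 1^2 + ((q 0^2 + q 1^2 + q 2^2 + a1 - b1)*q 0^2 + (q 0^2 + q 1^2 + q 3^2 + a1 - b2)*q 1^2 + 2*q 0*q 1*q 2*q 3)) = (fun t : ℝ => (0)*t^4 + (0)*t^3 + ((-1)*q 1^2*(a1 - a2)⁻¹)*t^2 + ((2)*q 1*q 3*p 1*(a1 - a2)⁻¹ + (2)*q 1*q 2*p 0*(a1 - a2)⁻¹ + (-2)*q 0*q 1*p 2*(a1 - a2)⁻¹)*t + (p 1^2 + p 0^2 + (-1)*q 3^2*p 1^2*(a1 - a2)⁻¹ + (-2)*q 2*q 3*p 0*p 1*(a1 - a2)⁻¹ + (-1)*q 2^2*p 0^2*(a1 - a2)⁻¹ + (-1)*q 1^2*b2 + q 1^2*a1 + q 1^2*q 3^2 + q 1^4 + (2)*q 0*q 3*p 1*p 2*(a1 - a2)⁻¹ + (2)*q 0*q 2*p 0*p 2*(a1 - a2)⁻¹ + (2)*q 0*q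 1*q 2*q 3 + (-1)*q 0^2*b1 + q 0^2*a1 + (-1)*q 0^2*p 2^2*(a1 - a2)⁻¹ + q 0^2*q 2^2 + (2)*q 0^2*q 1^2 + q 0^4)) from by funext t; ring, dkey]
  rw [show (fun t : ℝ => (1/2)*(p 0^2 + p 1^2 + p 2^2 + t^2) + (1/2)*(q 0^2 + q 1^2)^2 + (1/2)*(q 2^2 + q 3^2)^2 + (q 0*q 2 + q 1*q 3)^2 + ((a1 - b1)/2)*q 0^2 + ((a1 - b2)/2)*q 1^2 + ((a2 - b1)/2)*q 2^2 + ((a2 - b2)/2)*q 3^2) = (fun t : ℝ => (0)*t^4 + (0)*t^3 + ((1/2))*t^2 + (0)*t + ((1/2)*p 2^2 + (1/2)*p 1^2 + (1/2)*p 0^2 + (-1/2)*q 3^2*b2 + (1/2)*q 3^2*a2 + (1/2)*q 3^4 + (-1/2)*q 2^2*b1 + (1/2)*q 2^2*a2 + q 2^2*q 3^2 + (1/2)*q 2^4 + (-1/2)*q 1^2*b2 + (1/2)*q 1^2*a1 + q 1^2*q 3^2 + (1/2)*q 1^4 + (2)*q 0*q 1*q 2*q 3 + (-1/2)*q 0^2*b1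 + (1/2)*q 0^2*a1 + q 0^2*q 2^2 + q 0^2*q 1^2 + (1/2)*q 0^4)) from by funext t; ring, dkey]
  rw [show (fun t : ℝ => -((q 0*p 2 - q 2*p 0) + (q 1*p 3 - t*p 1))^2/(a1 - a2) + p 0^2 + p 1^2 + ((q 0^2 + q 1^2 + q 2^2 + a1 - b1)*q 0^2 + (q 0^2 + q 1^2 + t^2 + a1 - b2)*q 1^2 + 2*q 0*q 1*q 2*t)) = (fun t : ℝ => (0)*t^4 + (0)*t^3 + ((-1)*p 1^2*(a1 - a2)⁻¹ + q 1^2)*t^2 + ((-2)*q 2*p 0*p 1*(a1 - a2)⁻¹ + (2)*q 1*p 1*p 3*(a1 - a2)⁻¹ + (2)*q 0*p 1*p 2*(a1 - a2)⁻¹ + (2)*q 0*q 1*q 2)*t + (p 1^2 + p 0^2 + (-1)*q 2^2*p 0^2*(a1 - a2)⁻¹ + (2)*q 1*q 2*p 0*p 3*(a1 - a2)⁻¹ + (-1)*q 1^2*b2 + q 1^2*a1 + (-1)*q 1^2*p 3^2*(a1 - a2)⁻¹ + q 1^4 + (2)*q 0*q 2*p 0*p 2*(a1 - a2)⁻¹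 + (-2)*q 0*q 1*p 2*p 3*(a1 - a2)⁻¹ + (-1)*q 0^2*b1 + q 0^2*a1 + (-1)*q 0^2*p 2^2*(a1 - a2)⁻¹ + q 0^2*q 2^2 + (2)*q 0^2*q 1^2 + q 0^4)) from by funext t; ring, dkey]
  have h' : a1 - a2 ≠ 0 := sub_ne_zero.mpr h
  field_simp
  ring
end

section
/- For the A.III case with m = n = 2, the quadratic integrals f1 = -M12^2/(a1-a2) + p1^2 + p2^2 + v1 and f2 = M12^2/(a1-a2) + p3^2 + p4^2 + v2 Poisson-commute with each other, where v1 = (q1^2+q2^2+q3^2+a1-b1)q1^2 + (q1^2+q2^2+q4^2+a1-b2)q2^2 + 2q1q2q3q4 and v2 = (q1^2+q3^2+q4^2+a2-b1)q3^2 + (q2^2+q3^2+q4^2+a2-b2)q4^2 + 2q1q2q3q4. -/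
lemma deriv_hmul (c x : ℝ) : deriv (HMul.hMul c) x = c := by
  simpa using ((hasDerivAt_id x).const_mul c).deriv

set_option maxHeartbeats 4000000 in
theorem stmt7 (a1 a2 b1 b2 : ℝ) (h : a1 ≠ a2) :
    pb (n := 4) (fun x => -((x.1 0*x.2 2 - x.1 2*x.2 0) + (x.1 1*x.2 3 - x.1 3*x.2 1))^2/(a1 - a2) + x.2 0^2 + x.2 1^2 + ((x.1 0^2 + x.1 1^2 + x.1 2^2 + a1 - b1)*x.1 0^2 + (x.1 0^2 + x.1 1^2 + x.1 3^2 + a1 - b2)*x.1 1^2 + 2*x.1 0*x.1 1*x.1 2*x.1 3))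
      (fun x => ((x.1 0*x.2 2 - x.1 2*x.2 0) + (x.1 1*x.2 3 - x.1 3*x.2 1))^2/(a1 - a2) + x.2 2^2 + x.2 3^2 + ((x.1 0^2 + x.1 2^2 + x.1 3^2 + a2 - b1)*x.1 2^2 + (x.1 1^2 + x.1 2^2 + x.1 3^2 + a2 - b2)*x.1 3^2 + 2*x.1 0*x.1 1*x.1 2*x.1 3)) = 0 := by
  have hΔ : a1 - a2 ≠ 0 := sub_ne_zero.mpr h
  funext x
  obtain ⟨q, p⟩ := x
  rw [Pi.zero_apply]
  simp only [pb, Fin.sum_univ_four, Function.update_self, Function.update_of_ne,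
    ne_eq, Fin.reduceEq, not_false_eq_true]
  simp (disch := fun_prop) only [deriv_fun_add, deriv_fun_mul, deriv_fun_pow, deriv_const', deriv_id'',
    deriv_div_const, deriv.fun_neg, deriv_fun_sub, deriv_mul_const_field, deriv_const_mul_field,
    deriv_hmul]
  field_simp
  ring
end

section
/- For the BD.I case with n = 5, the Hamiltonian H = Σ_{k=1}^5 p_k^2 + 4(Σ_{k=1}^5 q_k^2)^2 - 2(2q1q5 - 2q2q4 + q3^2)^2 Poisson-commutes with the linear function r1 = (q1*p2 - p1*q2) + (q4*p5 - p4*q5). -/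
-- H wrt q, positions 0..4
lemma dq0 (C a b c d e w z v : ℝ) :
    deriv (fun t => C + 4*(t^2+a+b+c+d)^2 - 2*(2*t*e - w + z)^2) v
      = 16*v*(v^2+a+b+c+d) - 8*e*(2*v*e - w + z) := by
  have h1 : HasDerivAt (fun t : ℝ => t^2+a+b+c+d) (2*v) v := by
    simpa using ((((hasDerivAt_pow 2 v).add_const a).add_const b).add_const c).add_const d
  have h2 : HasDerivAt (fun t : ℝ => 2*t*e - w + z) (2*e) v := by
    simpa using ((((hasDerivAt_id' (x := v)).const_mul 2).mul_const e).sub_const w).add_const z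
  have h := (((h1.pow 2).const_mul 4).const_add C).sub ((h2.pow 2).const_mul 2)
  refine h.deriv.trans ?_; norm_num; ring

lemma dq1 (C a b c d e w z v : ℝ) :
    deriv (fun t => C + 4*(a+t^2+b+c+d)^2 - 2*(w - 2*t*e + z)^2) v
      = 16*v*(a+v^2+b+c+d) + 8*e*(w - 2*v*e + z) := by
  have h1 : HasDerivAt (fun t : ℝ => a+t^2+b+c+d) (2*v) v := by
    simpa using ((((hasDerivAt_pow 2 v).const_add a).add_const b).add_const c).add_const d
  have h2 : HasDerivAt (fun t : ℝ => w - 2*t*e + z) (-(2*e)) v := by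
    simpa using ((((hasDerivAt_id' (x := v)).const_mul 2).mul_const e).const_sub w).add_const z
  have h := (((h1.pow 2).const_mul 4).const_add C).sub ((h2.pow 2).const_mul 2)
  refine h.deriv.trans ?_; norm_num; ring

lemma dq2 (C a b c d w u v : ℝ) :
    deriv (fun t => C + 4*(a+b+t^2+c+d)^2 - 2*(w - u + t^2)^2) v
      = 16*v*(a+b+v^2+c+d) - 8*v*(w - u + v^2) := by
  have h1 : HasDerivAt (fun t : ℝ => a+b+t^2+c+d) (2*v) v := by
    simpa using (((hasDerivAt_pow 2 v).const_add (a+b)).add_const c).add_const d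
  have h2 : HasDerivAt (fun t : ℝ => w - u + t^2) (2*v) v := by
    simpa using (hasDerivAt_pow 2 v).const_add (w - u)
  have h := (((h1.pow 2).const_mul 4).const_add C).sub ((h2.pow 2).const_mul 2)
  refine h.deriv.trans ?_; norm_num; ring

lemma dq3 (C a b c d e w z v : ℝ) :
    deriv (fun t => C + 4*(a+b+c+t^2+d)^2 - 2*(w - 2*e*t + z)^2) v
      = 16*v*(a+b+c+v^2+d) + 8*e*(w - 2*e*v + z) := by
  have h1 : HasDerivAt (fun t : ℝ => a+b+c+t^2+d) (2*v) v := by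
    simpa using ((hasDerivAt_pow 2 v).const_add (a+b+c)).add_const d
  have h2 : HasDerivAt (fun t : ℝ => w - 2*e*t + z) (-(2*e)) v := by
    simpa using (((hasDerivAt_id' (x := v)).const_mul (2*e)).const_sub w).add_const z
  have h := (((h1.pow 2).const_mul 4).const_add C).sub ((h2.pow 2).const_mul 2)
  refine h.deriv.trans ?_; norm_num; ring

lemma dq4 (C a b c d e w z v : ℝ) :
    deriv (fun t => C + 4*(a+b+c+d+t^2)^2 - 2*(2*e*t - w + z)^2) v
      = 16*v*(a+b+c+d+v^2) - 8*e*(2*e*v - w + z) := by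
  have h1 : HasDerivAt (fun t : ℝ => a+b+c+d+t^2) (2*v) v := by
    simpa using (hasDerivAt_pow 2 v).const_add (a+b+c+d)
  have h2 : HasDerivAt (fun t : ℝ => 2*e*t - w + z) (2*e) v := by
    simpa using (((hasDerivAt_id' (x := v)).const_mul (2*e)).sub_const w).add_const z
  have h := (((h1.pow 2).const_mul 4).const_add C).sub ((h2.pow 2).const_mul 2)
  refine h.deriv.trans ?_; norm_num; ring

-- H wrt p, positions 0..4
lemma dp0 (a b c d K L v : ℝ) :
    deriv (fun t => t^2 + a + b + c + d + K - L) v = 2*v := by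
  have h := ((((((hasDerivAt_pow 2 v).add_const a).add_const b).add_const c).add_const d).add_const K).sub_const L
  rw [h.deriv]; norm_num

lemma dp1 (a b c d K L v : ℝ) :
    deriv (fun t => a + t^2 + b + c + d + K - L) v = 2*v := by
  have h := ((((((hasDerivAt_pow 2 v).const_add a).add_const b).add_const c).add_const d).add_const K).sub_const L
  rw [h.deriv]; norm_num

lemma dp2 (a b c d K L v : ℝ) :
    deriv (fun t => a + b + t^2 + c + d + K - L) v = 2*v := by
  have h : HasDerivAt (fun t : ℝ => a + b + t^2 + c + d + K - L) (2*v) v := by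
    simpa using ((((((hasDerivAt_pow 2 v).const_add (a+b)).add_const c).add_const d).add_const K).sub_const L)
  exact h.deriv

lemma dp3 (a b c d K L v : ℝ) :
    deriv (fun t => a + b + c + t^2 + d + K - L) v = 2*v := by
  have h : HasDerivAt (fun t : ℝ => a + b + c + t^2 + d + K - L) (2*v) v := by
    simpa using (((((hasDerivAt_pow 2 v).const_add (a+b+c)).add_const d).add_const K).sub_const L)
  exact h.deriv

lemma dp4 (a b c d K L v : ℝ) :
    deriv (fun t => a + b + c + d + t^2 + K - L) v = 2*v := by
  have h : HasDerivAt (fun t : ℝ => a + b + c + d + t^2 + K - L) (2*v) v := by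
    simpa using ((((hasDerivAt_pow 2 v).const_add (a+b+c+d)).add_const K).sub_const L)
  exact h.deriv

-- r derivatives
lemma rp0 (A B C v : ℝ) : deriv (fun t => A - t*B + C) v = -B := by
  have h := (((hasDerivAt_id' (x := v)).mul_const B).const_sub A).add_const C
  rw [h.deriv]; norm_num
lemma rq0 (A B C v : ℝ) : deriv (fun t => t*B - A + C) v = B := by
  have h := (((hasDerivAt_id' (x := v)).mul_const B).sub_const A).add_const C
  rw [h.deriv]; norm_num
lemma rp1 (A B C v : ℝ) : deriv (fun t => A*t - B + C) v = A := by
  have h := (((hasDerivAt_id' (x := v)).const_mul A).sub_const B).add_const C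
  rw [h.deriv]; norm_num
lemma rq1 (A B C v : ℝ) : deriv (fun t => A - B*t + C) v = -B := by
  have h := (((hasDerivAt_id' (x := v)).const_mul B).const_sub A).add_const C
  rw [h.deriv]; norm_num
lemma rc (A v : ℝ) : deriv (fun _ : ℝ => A) v = 0 := deriv_const v A
lemma rp3 (A B C D v : ℝ) : deriv (fun t => A - B + (C - t*D)) v = -D := by
  have h := (((hasDerivAt_id' (x := v)).mul_const D).const_sub C).const_add (A - B)
  rw [h.deriv]; norm_num
lemma rq3 (A B C D v : ℝ) : deriv (fun t => A - B + (t*C - D)) v = C := by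
  have h := (((hasDerivAt_id' (x := v)).mul_const C).sub_const D).const_add (A - B)
  rw [h.deriv]; norm_num
lemma rp4 (A B C D v : ℝ) : deriv (fun t => A - B + (C*t - D)) v = C := by
  have h := (((hasDerivAt_id' (x := v)).const_mul C).sub_const D).const_add (A - B)
  rw [h.deriv]; norm_num
lemma rq4 (A B C D v : ℝ) : deriv (fun t => A - B + (C - D*t)) v = -D := by
  have h := (((hasDerivAt_id' (x := v)).const_mul D).const_sub C).const_add (A - B)
  rw [h.deriv]; norm_num

theorem stmt10 :
    pb (n := 5) (fun x => x.2 0^2 + x.2 1^2 + x.2 2^2 + x.2 3^2 + x.2 4^2 + 4*(x.1 0^2 + x.1 1^2 + x.1 2^2 + x.1 3^2 + x.1 4^2)^2 - 2*(2*x.1 0*x.1 4 - 2*x.1 1*x.1 3 + x.1 2^2)^2) (fun x => (x.1 0*x.2 1 - x.2 0*x.1 1) + (x.1 3*x.2 4 - x.2 3*x.1 4)) = 0 := by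
  funext x
  simp only [pb]
  rw [Fin.sum_univ_five]
  simp only [Function.update_apply]
  simp only [Fin.reduceEq, reduceIte]
  rw [dq0, dq1, dq2, dq3, dq4, dp0, dp1, dp2, dp3, dp4, rp0, rq0, rp1, rq1, rc, rc, rp3, rq3, rp4, rq4]
  show _ = (0 : (Fin 5 → ℝ) × (Fin 5 → ℝ) → ℝ) x
  simp only [Pi.zero_apply]
  ring
end

section
/- The linear functions r1 = (q1p2-p1q2)+(q4p5-p4q5), r2 = (q2p3-p2q3)+(q3p4-p3q4), r3 = (q1p3-p1q3)+(q5p3-p5q3), r4 = (q1p4-p1q4)+(q2p5-p2q5) on T*R^5 satisfy the Poisson bracket relations {r1, r2} = -r3, {r1, r3} = r2, {r1, r4} = 0, {r4, r2} = r3, {r4, r3} = -r2, {r2, r3} = r4 - r1. -/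
set_option maxHeartbeats 4000000


theorem stmt12 :
    pb (n := 5) (fun x => (x.1 0*x.2 1 - x.2 0*x.1 1) + (x.1 3*x.2 4 - x.2 3*x.1 4)) (fun x => (x.1 1*x.2 2 - x.2 1*x.1 2) + (x.1 2*x.2 3 - x.2 2*x.1 3)) = (fun x => -((x.1 0*x.2 2 - x.2 0*x.1 2) + (x.1 4*x.2 2 - x.2 4*x.1 2))) ∧
    pb (n := 5) (fun x => (x.1 0*x.2 1 - x.2 0*x.1 1) + (x.1 3*x.2 4 - x.2 3*x.1 4)) (fun x => (x.1 0*x.2 2 - x.2 0*x.1 2) + (x.1 4*x.2 2 - x.2 4*x.1 2)) = (fun x => (x.1 1*x.2 2 - x.2 1*x.1 2) + (x.1 2*x.2 3 - x.2 2*x.1 3)) ∧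
    pb (n := 5) (fun x => (x.1 0*x.2 1 - x.2 0*x.1 1) + (x.1 3*x.2 4 - x.2 3*x.1 4)) (fun x => (x.1 0*x.2 3 - x.2 0*x.1 3) + (x.1 1*x.2 4 - x.2 1*x.1 4)) = 0 ∧
    pb (n := 5) (fun x => (x.1 0*x.2 3 - x.2 0*x.1 3) + (x.1 1*x.2 4 - x.2 1*x.1 4)) (fun x => (x.1 1*x.2 2 - x.2 1*x.1 2) + (x.1 2*x.2 3 - x.2 2*x.1 3)) = (fun x => (x.1 0*x.2 2 - x.2 0*x.1 2) + (x.1 4*x.2 2 - x.2 4*x.1 2)) ∧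
    pb (n := 5) (fun x => (x.1 0*x.2 3 - x.2 0*x.1 3) + (x.1 1*x.2 4 - x.2 1*x.1 4)) (fun x => (x.1 0*x.2 2 - x.2 0*x.1 2) + (x.1 4*x.2 2 - x.2 4*x.1 2)) = (fun x => -((x.1 1*x.2 2 - x.2 1*x.1 2) + (x.1 2*x.2 3 - x.2 2*x.1 3))) ∧
    pb (n := 5) (fun x => (x.1 1*x.2 2 - x.2 1*x.1 2) + (x.1 2*x.2 3 - x.2 2*x.1 3)) (fun x => (x.1 0*x.2 2 - x.2 0*x.1 2) + (x.1 4*x.2 2 - x.2 4*x.1 2)) = (fun x => ((x.1 0*x.2 3 - x.2 0*x.1 3) + (x.1 1*x.2 4 - x.2 1*x.1 4)) - ((x.1 0*x.2 1 - x.2 0*x.1 1) + (x.1 3*x.2 4 - x.2 3*x.1 4))) := by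
  have d1 : ∀ a x : ℝ, deriv (fun t => t * a) x = a := by intro a x; simp
  have d2 : ∀ a x : ℝ, deriv (fun t => a * t) x = a := by intro a x; simp [mul_comm a]
  refine ⟨?_, ?_, ?_, ?_, ?_, ?_⟩ <;>
  · funext x
    simp only [pb, Fin.sum_univ_five, Function.update_apply]
    norm_num
    simp (disch := fun_prop) [deriv_sub, deriv_add, d1, d2]
    ring
end
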